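/- Let g be a semi-inner product on a real normed space X, let x₁, …, xₙ ∈ X with Γ(x₁,…,xₙ) ≠ 0, and let y ∈ X. Then there exists a unique vector y_S in span{x₁,…,xₙ} such that g(x_i, y − y_S) = 0 for every i = 1, …, n (y_S is the g-orthogonal projection of y on S = span{x₁,…,xₙ}). -/

import Mathlib

/-- A semi-inner product on a real normed space `X`. -/
structure SemiInnerProduct (X : Type*) [NormedAddCommGroup X] [NormedSpace ℝ X] where
  g : X → X → ℝ
  g_self : ∀ x : X, g x x = ‖x‖ ^ 2
  g_smul : ∀ (a b : ℝ) (x y : X), g (a • x) (b • y) = a * b * g x y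
  g_add_right : ∀ x y z : X, g x (y + z) = g x y + g x z
  g_bound : ∀ x y : X, |g x y| ≤ ‖x‖ * ‖y‖


section Aux
variable {X : Type*} [NormedAddCommGroup X] [NormedSpace ℝ X] (G : SemiInnerProduct X)

lemma SIP.g_zero (x : X) : G.g x 0 = 0 := by
  have h := G.g_add_right x 0 0
  simpa using h.symm

lemma SIP.g_smul_right (c : ℝ) (x z : X) : G.g x (c • z) = c * G.g x z := by
  have := G.g_smul 1 c x z
  simpa using this

lemma SIP.g_neg (x z : X) : G.g x (-z) = - G.g x z := by
  have := SIP.g_smul_right G (-1) x z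
  simpa using this

lemma SIP.g_sub (x a b : X) : G.g x (a - b) = G.g x a - G.g x b := by
  rw [sub_eq_add_neg, G.g_add_right, SIP.g_neg, sub_eq_add_neg]

lemma SIP.g_sum {ι : Type*} [DecidableEq ι] (s : Finset ι) (x : X) (v : ι → X) (c : ι → ℝ) :
    G.g x (∑ k ∈ s, c k • v k) = ∑ k ∈ s, c k * G.g x (v k) := by
  induction s using Finset.induction_on with
  | empty => simpa using SIP.g_zero G x
  | @insert a s h ih =>
      rw [Finset.sum_insert h, Finset.sum_insert h, G.g_add_right,
        SIP.g_smul_right, ih]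

end Aux

/-- The g-angle between two vectors: `A_g(x,y) = arccos (g(y,x) / (‖x‖·‖y‖))`. -/
noncomputable def gAngle {X : Type*} [NormedAddCommGroup X] [NormedSpace ℝ X]
    (G : SemiInnerProduct X) (x y : X) : ℝ :=
  Real.arccos (G.g y x / (‖x‖ * ‖y‖))

/-- If `Γ(x₁,…,xₙ) ≠ 0`, then for every `y` there is a unique `yS` in
`span{x₁,…,xₙ}` with `g(xᵢ, y − yS) = 0` for all `i` (the g-orthogonal
projection of `y` on `S`). -/
theorem exists_unique_g_orthogonal_projection
    {X : Type*} [NormedAddCommGroup X] [NormedSpace ℝ X]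
    (G : SemiInnerProduct X) (n : ℕ) (x : Fin n → X)
    (hΓ : (Matrix.of fun i k : Fin n => G.g (x i) (x k)).det ≠ 0) (y : X) :
    ∃! yS : X, yS ∈ Submodule.span ℝ (Set.range x) ∧
      ∀ i : Fin n, G.g (x i) (y - yS) = 0 := by
  set M : Matrix (Fin n) (Fin n) ℝ := Matrix.of fun i k : Fin n => G.g (x i) (x k) with hM
  have hMunit : IsUnit M.det := isUnit_iff_ne_zero.mpr hΓ
  -- injectivity of mulVec
  have hinj : ∀ d : Fin n → ℝ, M.mulVec d = 0 → d = 0 := by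
    intro d hd
    have := congrArg (M⁻¹.mulVec) hd
    rwa [Matrix.mulVec_mulVec, Matrix.nonsing_inv_mul M hMunit, Matrix.one_mulVec,
      Matrix.mulVec_zero] at this
  set v : Fin n → ℝ := fun i => G.g (x i) y with hv
  set c : Fin n → ℝ := M⁻¹.mulVec v with hc
  have hMc : M.mulVec c = v := by
    rw [hc, Matrix.mulVec_mulVec, Matrix.mul_nonsing_inv M hMunit, Matrix.one_mulVec]
  refine ⟨∑ k, c k • x k, ⟨?_, ?_⟩, ?_⟩
  · exact Submodule.sum_mem _ fun k _ =>
      Submodule.smul_mem _ _ (Submodule.subset_span ⟨k, rfl⟩)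
  · intro i
    rw [SIP.g_sub, SIP.g_sum]
    have : ∑ k, c k * G.g (x i) (x k) = M.mulVec c i := by
      simp [Matrix.mulVec, dotProduct, hM, mul_comm]
    rw [this, hMc]
    simp [hv]
  · rintro z ⟨hzmem, hz⟩
    obtain ⟨d, hd⟩ := (Finsupp.mem_span_range_iff_exists_finsupp).mp hzmem
    have hd' : z = ∑ k, d k • x k := by
      rw [← hd, Finsupp.sum_fintype]
      intro i; simp
    have key : M.mulVec d = v := by
      funext i
      have := hz i
      rw [hd', SIP.g_sub, SIP.g_sum] at this
      have h2 : ∑ k, d k * G.g (x i) (x k) = M.mulVec d i := by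
        simp [Matrix.mulVec, dotProduct, hM, mul_comm]
      rw [h2] at this
      have := sub_eq_zero.mp this
      simp [hv, ← this]
    have : d = c := by
      have : M.mulVec (d - c) = 0 := by
        rw [Matrix.mulVec_sub, key, hMc, sub_self]
      have := hinj _ this
      exact sub_eq_zero.mp (by funext i; exact congrFun this i)
    rw [hd', this]
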